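/- The matrix Q satisfies Qᵀ·Q = I_n - (1/n)·1_n·1_nᵀ, the orthogonal projection onto the complement of the span of the all-ones vector. -/

import Mathlib

lemma sum_one_ind {m : ℕ} (i0 : Fin m) (X Y : ℝ) :
    ∑ i : Fin m, (if i = i0 then X else Y) = (m : ℝ) * Y + (X - Y) := by
  have h : ∀ i : Fin m, (if i = i0 then X else Y)
      = Y + (if i = i0 then X - Y else 0) := by
    intro i; split <;> ring
  rw [Finset.sum_congr rfl fun i _ => h i, Finset.sum_add_distrib,
    Finset.sum_const, Finset.sum_ite_eq' Finset.univ i0,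
    if_pos (Finset.mem_univ _)]
  simp [mul_comm]

lemma sum_two_ind {m : ℕ} (i1 i2 : Fin m) (hne : i1 ≠ i2) (X Y : ℝ) :
    ∑ i : Fin m, (if i = i1 then X else if i = i2 then X else Y)
      = (m : ℝ) * Y + 2 * (X - Y) := by
  have h : ∀ i : Fin m, (if i = i1 then X else if i = i2 then X else Y)
      = Y + ((if i = i1 then X - Y else 0) + (if i = i2 then X - Y else 0)) := by
    intro i
    rcases eq_or_ne i i1 with h1 | h1 <;> rcases eq_or_ne i i2 with h2 | h2
    · exact absurd (h1.symm.trans h2) hne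
    all_goals simp_all
  rw [Finset.sum_congr rfl fun i _ => h i, Finset.sum_add_distrib,
    Finset.sum_add_distrib, Finset.sum_const,
    Finset.sum_ite_eq' Finset.univ i1, Finset.sum_ite_eq' Finset.univ i2,
    if_pos (Finset.mem_univ _), if_pos (Finset.mem_univ _)]
  simp [mul_comm]
  ring

/-- The matrix `Q` satisfies `Qᵀ · Q = Iₙ - (1/n)·1ₙ·1ₙᵀ`. -/
theorem stmt2 (n : ℕ) (hn : 2 ≤ n)
    (v : ℝ) (hv : v = (n - Real.sqrt n) / (n * (n - 1)))
    (Q : Matrix (Fin (n - 1)) (Fin n) ℝ)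
    (hQ : ∀ (i : Fin (n - 1)) (j : Fin n),
      Q i j = if (j : ℕ) = 0 then -1 + (n - 1) * v
              else if (j : ℕ) = (i : ℕ) + 1 then 1 - v else -v) :
    Q.transpose * Q
      = 1 - (1 / (n : ℝ)) • Matrix.of (fun (_ _ : Fin n) => (1 : ℝ)) := by
  set s := Real.sqrt (n : ℝ) with hsdef
  have hNn : (2:ℝ) ≤ (n:ℝ) := by exact_mod_cast hn
  have hn0 : (0:ℝ) < n := by linarith
  have hs2 : s * s = (n:ℝ) := Real.mul_self_sqrt hn0.le
  have hsnn : 0 ≤ s := Real.sqrt_nonneg _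
  have hs1 : 1 < s := by nlinarith
  have hs0 : s ≠ 0 := by positivity
  have hs3 : s + 1 ≠ 0 := by positivity
  have hv' : v = 1 / (s * (s + 1)) := by
    rw [hv, div_eq_div_iff (by nlinarith) (by positivity)]
    linear_combination ((n:ℝ) - s - 1) * hs2
  have hcast : ((n - 1 : ℕ) : ℝ) = (n : ℝ) - 1 := by
    push_cast [Nat.cast_sub (show 1 ≤ n by omega)]; ring
  ext j k
  rw [Matrix.mul_apply]
  simp only [Matrix.transpose_apply, Matrix.sub_apply, Matrix.smul_apply,
    Matrix.of_apply, smul_eq_mul, mul_one, Matrix.one_apply, hQ]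
  by_cases hj : (j : ℕ) = 0 <;> by_cases hk : (k : ℕ) = 0
  · -- j = 0, k = 0
    have hjk : j = k := Fin.ext (hj.trans hk.symm)
    simp only [if_pos hj, if_pos hk, if_pos hjk, Finset.sum_const,
      Finset.card_univ, Fintype.card_fin, nsmul_eq_mul, hcast]
    rw [hv', ← hs2]
    field_simp
    ring
  · -- j = 0, k ≠ 0
    have hjk : ¬ j = k := fun h => hk (by rw [← h]; exact hj)
    have hklt := k.isLt
    have hcond : ∀ i : Fin (n-1), ((k:ℕ) = (i:ℕ)+1) ↔
        (i = (⟨(k:ℕ)-1, by omega⟩ : Fin (n-1))) := by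
      intro i
      simp only [Fin.ext_iff, Fin.val_mk]
      constructor <;> (intro h; omega)
    simp only [if_pos hj, if_neg hk, if_neg hjk, hcond, mul_ite]
    rw [sum_one_ind, hcast, hv', ← hs2]
    field_simp
    ring
  · -- j ≠ 0, k = 0
    have hjk : ¬ j = k := fun h => hj (by rw [h]; exact hk)
    have hjlt := j.isLt
    have hcond : ∀ i : Fin (n-1), ((j:ℕ) = (i:ℕ)+1) ↔
        (i = (⟨(j:ℕ)-1, by omega⟩ : Fin (n-1))) := by
      intro i
      simp only [Fin.ext_iff, Fin.val_mk]
      constructor <;> (intro h; omega)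
    simp only [if_pos hk, if_neg hj, if_neg hjk, hcond, ite_mul]
    rw [sum_one_ind, hcast, hv', ← hs2]
    field_simp
    ring
  · -- j ≠ 0, k ≠ 0
    have hjlt := j.isLt
    have hklt := k.isLt
    by_cases hjk : j = k
    · subst hjk
      have hcond : ∀ i : Fin (n-1), ((j:ℕ) = (i:ℕ)+1) ↔
          (i = (⟨(j:ℕ)-1, by omega⟩ : Fin (n-1))) := by
        intro i
        simp only [Fin.ext_iff, Fin.val_mk]
        constructor <;> (intro h; omega)
      have hpt : ∀ i : Fin (n-1),
          (if (j:ℕ) = (i:ℕ)+1 then 1 - v else -v) *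
            (if (j:ℕ) = (i:ℕ)+1 then 1 - v else -v)
          = if i = (⟨(j:ℕ)-1, by omega⟩ : Fin (n-1)) then (1-v)*(1-v)
            else (-v)*(-v) := by
        intro i
        simp only [hcond i]
        split <;> ring
      simp only [if_neg hj, if_pos rfl, ↓reduceIte]
      rw [Finset.sum_congr rfl fun i _ => hpt i, sum_one_ind, hcast, hv', ← hs2]
      field_simp
      ring
    · have hjk' : (j:ℕ) ≠ (k:ℕ) := fun h => hjk (Fin.ext h)
      have hij : ((j:ℕ)-1) < n - 1 := by omega
      have hik : ((k:ℕ)-1) < n - 1 := by omega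
      have hne : (⟨(j:ℕ)-1, hij⟩ : Fin (n-1)) ≠ ⟨(k:ℕ)-1, hik⟩ := by
        intro h
        simp only [Fin.ext_iff, Fin.val_mk] at h
        omega
      have hpt : ∀ i : Fin (n-1),
          (if (j:ℕ) = (i:ℕ)+1 then 1 - v else -v) *
            (if (k:ℕ) = (i:ℕ)+1 then 1 - v else -v)
          = if i = (⟨(j:ℕ)-1, hij⟩ : Fin (n-1)) then (1-v)*(-v)
            else if i = (⟨(k:ℕ)-1, hik⟩ : Fin (n-1)) then (1-v)*(-v)
            else (-v)*(-v) := by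
        intro i
        have h1 : ((j:ℕ) = (i:ℕ)+1) ↔ (i = (⟨(j:ℕ)-1, hij⟩ : Fin (n-1))) := by
          simp only [Fin.ext_iff, Fin.val_mk]; constructor <;> (intro h; omega)
        have h2 : ((k:ℕ) = (i:ℕ)+1) ↔ (i = (⟨(k:ℕ)-1, hik⟩ : Fin (n-1))) := by
          simp only [Fin.ext_iff, Fin.val_mk]; constructor <;> (intro h; omega)
        rcases eq_or_ne i (⟨(j:ℕ)-1, hij⟩ : Fin (n-1)) with ha | ha <;>
          rcases eq_or_ne i (⟨(k:ℕ)-1, hik⟩ : Fin (n-1)) with hb | hb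
        · exact absurd (ha.symm.trans hb) hne
        · rw [if_pos (h1.mpr ha), if_neg (fun h => hb (h2.mp h)),
            if_pos ha]
        · rw [if_neg (fun h => ha (h1.mp h)), if_pos (h2.mpr hb),
            if_neg ha, if_pos hb]; ring
        · rw [if_neg (fun h => ha (h1.mp h)), if_neg (fun h => hb (h2.mp h)),
            if_neg ha, if_neg hb]
      simp only [if_neg hj, if_neg hk, if_neg hjk]
      rw [Finset.sum_congr rfl fun i _ => hpt i, sum_two_ind _ _ hne, hcast,
        hv', ← hs2]
      field_simp
      ring
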